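/- In a cubic graph, every minimum cycle-separating edge cut is a matching (i.e., no two edges of the cut share a vertex). -/

import Mathlib

open SimpleGraph Finset

lemma cycle_two_neighbors {V : Type*} {H : SimpleGraph V} {v : V} {c : H.Walk v v}
    (hc : c.IsCycle) : ∃ a b : V, H.Adj v a ∧ H.Adj v b ∧ a ≠ b := by
  cases c with
  | nil => exact absurd hc SimpleGraph.Walk.IsCycle.not_of_nil
  | @cons _ w _ h q =>
    have hlen : 3 ≤ q.length + 1 := by simpa using hc.three_le_length
    have hq : q.darts ≠ [] := by
      intro hnil
      have h0 := q.length_darts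
      rw [hnil] at h0
      simp at h0
      omega
    set d := q.darts.getLast hq with hd
    have hdsnd : d.snd = v := by rw [hd, q.getLast_darts_eq_lastDart hq]; rfl
    have hdadj : H.Adj d.fst d.snd := d.adj
    refine ⟨w, d.fst, h, ?_, ?_⟩
    · rw [hdsnd] at hdadj; exact hdadj.symm
    · intro hwd
      have hmem : d.edge ∈ q.edges := List.mem_map_of_mem (List.getLast_mem hq)
      have hedge : d.edge = s(v, w) := by
        have : d.edge = s(d.fst, d.snd) := rfl
        rw [this, ← hwd, hdsnd]
        exact Sym2.eq_swap
      have hnodup := hc.edges_nodup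
      rw [SimpleGraph.Walk.edges_cons, List.nodup_cons] at hnodup
      exact hnodup.1 (hedge ▸ hmem)

lemma walk_closed {V : Type*} {H : SimpleGraph V} (S : V → Prop)
    (hS : ∀ a b, S a → H.Adj a b → S b) {u v : V} (p : H.Walk u v) (hu : S u) : S v := by
  induction p with
  | nil => exact hu
  | cons h q ih => exact ih (hS _ _ hu h)

lemma reach_split {V : Type*} {G : SimpleGraph V} {B : Set (Sym2 V)} {a b u v : V}
    (p : (G.deleteEdges (B \ {s(a,b)})).Walk u v) :
    (G.deleteEdges B).Reachable u v ∨
    ((G.deleteEdges B).Reachable u a ∧ (G.deleteEdges B).Reachable b v) ∨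
    ((G.deleteEdges B).Reachable u b ∧ (G.deleteEdges B).Reachable a v) := by
  induction p with
  | nil => exact Or.inl (SimpleGraph.Reachable.refl _)
  | @cons x y _ h q ih =>
    rw [SimpleGraph.deleteEdges_adj] at h
    by_cases hB : s(x, y) ∈ B
    · have : s(x, y) = s(a, b) := by
        by_contra hne
        exact h.2 ⟨hB, hne⟩
      rw [Sym2.eq_iff] at this
      rcases this with ⟨hxa, hyb⟩ | ⟨hxb, hya⟩
      · subst hxa; subst hyb
        rcases ih with h1 | ⟨h1, h2⟩ | ⟨h1, h2⟩
        · exact Or.inr (Or.inl ⟨SimpleGraph.Reachable.refl _, h1⟩)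
        · exact Or.inr (Or.inl ⟨SimpleGraph.Reachable.refl _, h2⟩)
        · exact Or.inl (h2)
      · subst hxb; subst hya
        rcases ih with h1 | ⟨h1, h2⟩ | ⟨h1, h2⟩
        · exact Or.inr (Or.inr ⟨SimpleGraph.Reachable.refl _, h1⟩)
        · exact Or.inl h2
        · exact Or.inr (Or.inr ⟨SimpleGraph.Reachable.refl _, h2⟩)
    · have hadj : (G.deleteEdges B).Adj x y := by
        rw [SimpleGraph.deleteEdges_adj]; exact ⟨h.1, hB⟩
      rcases ih with h1 | ⟨h1, h2⟩ | ⟨h1, h2⟩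
      · exact Or.inl (hadj.reachable.trans h1)
      · exact Or.inr (Or.inl ⟨hadj.reachable.trans h1, h2⟩)
      · exact Or.inr (Or.inr ⟨hadj.reachable.trans h1, h2⟩)

/-- An edge set `B` is cycle-separating: after deleting `B`, there are two vertices in
different components whose components both carry a cycle. -/
def CycleSeparating {V : Type*} (G : SimpleGraph V) (B : Set (Sym2 V)) : Prop :=
  ∃ (u v : V) (c₁ : (G.deleteEdges B).Walk u u) (c₂ : (G.deleteEdges B).Walk v v),
    c₁.IsCycle ∧ c₂.IsCycle ∧ ¬ (G.deleteEdges B).Reachable u v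

lemma core_cs {V : Type*} [Fintype V] [DecidableEq V] (G : SimpleGraph V) [DecidableRel G.Adj]
    (B : Finset (Sym2 V)) {u v v₀ u₀ w₀ x : V}
    (he : s(v₀,u₀) ∈ B) (hf : s(v₀,w₀) ∈ B)
    (hgx : G.Adj v₀ x) (hgB : s(v₀,x) ∉ B)
    (hinc : ∀ z, G.Adj v₀ z → z = u₀ ∨ z = w₀ ∨ z = x)
    (c₁ : (G.deleteEdges (↑B : Set (Sym2 V))).Walk u u)
    (c₂ : (G.deleteEdges (↑B : Set (Sym2 V))).Walk v v)
    (hc₁ : c₁.IsCycle) (hc₂ : c₂.IsCycle)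
    (hnr : ¬ (G.deleteEdges (↑B : Set (Sym2 V))).Reachable u v)
    (hrv₀ : (G.deleteEdges (↑B : Set (Sym2 V))).Reachable u v₀)
    (hru₀ : (G.deleteEdges (↑B : Set (Sym2 V))).Reachable u₀ v)
    (hrw₀ : (G.deleteEdges (↑B : Set (Sym2 V))).Reachable w₀ v) :
    CycleSeparating G ↑(insert s(v₀,x) ((B.erase s(v₀,u₀)).erase s(v₀,w₀))) := by
  classical
  have key_adj : ∀ z, (G.deleteEdges (↑B : Set (Sym2 V))).Adj v₀ z → z = x := by
    intro z hz
    rw [SimpleGraph.deleteEdges_adj] at hz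
    rcases hinc z hz.1 with h | h | h
    · subst h; exact absurd he (by simpa using hz.2)
    · subst h; exact absurd hf (by simpa using hz.2)
    · exact h
  have not_supp₁ : v₀ ∉ c₁.support := by
    intro hsupp
    obtain ⟨a, b, ha, hb, hab⟩ := cycle_two_neighbors (hc₁.rotate hsupp)
    exact hab ((key_adj a ha).trans (key_adj b hb).symm)
  have not_supp₂ : v₀ ∉ c₂.support := by
    intro hsupp
    have hvv₀ : (G.deleteEdges (↑B : Set (Sym2 V))).Reachable v v₀ := (c₂.takeUntil v₀ hsupp).reachable
    exact hnr (hrv₀.trans hvv₀.symm)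
  have hsub : ∀ {w : V} (c : (G.deleteEdges (↑B : Set (Sym2 V))).Walk w w), v₀ ∉ c.support →
      ∀ ε ∈ c.edges, ε ∈ (G.deleteEdges
        (↑(insert s(v₀,x) ((B.erase s(v₀,u₀)).erase s(v₀,w₀))) : Set (Sym2 V))).edgeSet := by
    intro w c hns ε hε
    have h1 : ε ∈ (G.deleteEdges (↑B : Set (Sym2 V))).edgeSet := c.edges_subset_edgeSet hε
    rw [SimpleGraph.edgeSet_deleteEdges] at h1
    rw [SimpleGraph.edgeSet_deleteEdges]
    refine ⟨h1.1, ?_⟩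
    intro hmem
    rw [Finset.mem_coe, Finset.mem_insert] at hmem
    rcases hmem with hmem | hmem
    · subst hmem
      exact hns (c.fst_mem_support_of_mem_edges hε)
    · exact h1.2 (Finset.mem_coe.mpr (Finset.mem_of_mem_erase (Finset.mem_of_mem_erase hmem)))
  have hur : ¬ (G.deleteEdges
      (↑(insert s(v₀,x) ((B.erase s(v₀,u₀)).erase s(v₀,w₀))) : Set (Sym2 V))).Reachable u v := by
    intro hr
    obtain ⟨p⟩ := hr
    have hu0 : u ≠ v₀ := fun h => not_supp₁ (h ▸ c₁.start_mem_support)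
    have hSv : (G.deleteEdges (↑B : Set (Sym2 V))).Reachable u v ∧ v ≠ v₀ := by
      refine walk_closed (fun z => (G.deleteEdges (↑B : Set (Sym2 V))).Reachable u z ∧ z ≠ v₀)
        ?_ p ⟨SimpleGraph.Reachable.refl _, hu0⟩
      intro a b ⟨hra, hav⟩ hadj
      rw [SimpleGraph.deleteEdges_adj] at hadj
      have hng : s(a,b) ≠ s(v₀,x) := by
        intro hh
        exact hadj.2 (by rw [Finset.mem_coe, hh]; exact Finset.mem_insert_self _ _)
      have hnB'' : s(a,b) ∉ (B.erase s(v₀,u₀)).erase s(v₀,w₀) := by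
        intro hh
        exact hadj.2 (by rw [Finset.mem_coe]; exact Finset.mem_insert_of_mem hh)
      by_cases hae : s(a,b) = s(v₀,u₀)
      · rw [Sym2.eq_iff] at hae
        rcases hae with ⟨h1, h2⟩ | ⟨h1, h2⟩
        · exact absurd h1 hav
        · subst h1
          exact absurd (hra.trans hru₀) hnr
      by_cases haf : s(a,b) = s(v₀,w₀)
      · rw [Sym2.eq_iff] at haf
        rcases haf with ⟨h1, h2⟩ | ⟨h1, h2⟩
        · exact absurd h1 hav
        · subst h1
          exact absurd (hra.trans hrw₀) hnr
      have hnB : s(a,b) ∉ B := by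
        intro hh
        exact hnB'' (Finset.mem_erase.mpr ⟨haf, Finset.mem_erase.mpr ⟨hae, hh⟩⟩)
      have hadj' : (G.deleteEdges (↑B : Set (Sym2 V))).Adj a b := by
        rw [SimpleGraph.deleteEdges_adj]
        exact ⟨hadj.1, by simpa using hnB⟩
      refine ⟨hra.trans hadj'.reachable, ?_⟩
      intro hb
      subst hb
      have := key_adj a hadj'.symm
      subst this
      exact hng Sym2.eq_swap
    exact hnr hSv.1
  exact ⟨u, v, c₁.transfer _ (hsub c₁ not_supp₁), c₂.transfer _ (hsub c₂ not_supp₂),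
    hc₁.transfer _, hc₂.transfer _, hur⟩

/-- In a connected cubic graph, every minimum cycle-separating edge cut is a matching. -/
theorem stmt11 {V : Type*} [Fintype V] [DecidableEq V] (G : SimpleGraph V)
    [DecidableRel G.Adj] (hconn : G.Connected) (hcubic : ∀ v, G.degree v = 3)
    (B : Finset (Sym2 V)) (hBE : B ⊆ G.edgeFinset)
    (hB : CycleSeparating G (↑B : Set (Sym2 V)))
    (hmin : ∀ B' : Finset (Sym2 V), B' ⊆ G.edgeFinset →
      CycleSeparating G (↑B' : Set (Sym2 V)) → B.card ≤ B'.card) :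
    ∀ e ∈ B, ∀ f ∈ B, e ≠ f → ∀ v : V, ¬ (v ∈ e ∧ v ∈ f) := by
  intro e heB f hfB hef v₀ hand
  obtain ⟨hve, hvf⟩ := hand
  obtain ⟨u, v, c₁, c₂, hc₁, hc₂, hnr⟩ := hB
  set u₀ := Sym2.Mem.other hve with hu₀def
  have he' : s(v₀, u₀) = e := Sym2.other_spec hve
  set w₀ := Sym2.Mem.other hvf with hw₀def
  have hf' : s(v₀, w₀) = f := Sym2.other_spec hvf
  have heB' : s(v₀, u₀) ∈ B := he' ▸ heB
  have hfB' : s(v₀, w₀) ∈ B := hf' ▸ hfB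
  have hcard : (G.incidenceFinset v₀).card = 3 := by
    rw [SimpleGraph.card_incidenceFinset_eq_degree]; exact hcubic v₀
  have heI : e ∈ G.incidenceFinset v₀ := by
    rw [SimpleGraph.mem_incidenceFinset]
    exact ⟨SimpleGraph.mem_edgeFinset.mp (hBE heB), hve⟩
  have hfI : f ∈ G.incidenceFinset v₀ := by
    rw [SimpleGraph.mem_incidenceFinset]
    exact ⟨SimpleGraph.mem_edgeFinset.mp (hBE hfB), hvf⟩
  have hcard2 : (((G.incidenceFinset v₀).erase e).erase f).card = 1 := by
    rw [Finset.card_erase_of_mem (Finset.mem_erase.mpr ⟨Ne.symm hef, hfI⟩),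
      Finset.card_erase_of_mem heI, hcard]
  obtain ⟨g, hg⟩ := Finset.card_eq_one.mp hcard2
  have hgI' : g ∈ ((G.incidenceFinset v₀).erase e).erase f := hg ▸ Finset.mem_singleton_self g
  have hgI : g ∈ G.incidenceSet v₀ := by
    rw [← SimpleGraph.mem_incidenceFinset]
    exact Finset.mem_of_mem_erase (Finset.mem_of_mem_erase hgI')
  have hvg : v₀ ∈ g := hgI.2
  set x := Sym2.Mem.other hvg with hxdef
  have hg' : s(v₀, x) = g := Sym2.other_spec hvg
  have hgadj : G.Adj v₀ x := G.mem_edgeSet.mp (hg' ▸ hgI.1 : s(v₀,x) ∈ G.edgeSet)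
  have hinc : ∀ z, G.Adj v₀ z → z = u₀ ∨ z = w₀ ∨ z = x := by
    intro z hz
    have hzI : s(v₀, z) ∈ G.incidenceFinset v₀ := by
      rw [SimpleGraph.mem_incidenceFinset]
      exact ⟨G.mem_edgeSet.mpr hz, Sym2.mem_mk_left _ _⟩
    by_cases h1 : s(v₀, z) = e
    · left; rw [← he'] at h1; exact Sym2.congr_right.mp h1
    by_cases h2 : s(v₀, z) = f
    · right; left; rw [← hf'] at h2; exact Sym2.congr_right.mp h2
    right; right
    have hmem : s(v₀, z) ∈ ((G.incidenceFinset v₀).erase e).erase f :=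
      Finset.mem_erase.mpr ⟨h2, Finset.mem_erase.mpr ⟨h1, hzI⟩⟩
    rw [hg] at hmem
    have := Finset.mem_singleton.mp hmem
    rw [← hg'] at this
    exact Sym2.congr_right.mp this
  have split : ∀ (p q : V), s(p, q) ∈ B →
      ((G.deleteEdges (↑B : Set (Sym2 V))).Reachable u p ∧
        (G.deleteEdges (↑B : Set (Sym2 V))).Reachable q v) ∨
      ((G.deleteEdges (↑B : Set (Sym2 V))).Reachable u q ∧
        (G.deleteEdges (↑B : Set (Sym2 V))).Reachable p v) := by
    intro p q hpq
    have hlt : (B.erase s(p, q)).card < B.card := Finset.card_erase_lt_of_mem hpq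
    have hsub' : B.erase s(p, q) ⊆ G.edgeFinset := (Finset.erase_subset _ _).trans hBE
    have hle : G.deleteEdges (↑B : Set (Sym2 V)) ≤
        G.deleteEdges (↑(B.erase s(p, q)) : Set (Sym2 V)) :=
      SimpleGraph.deleteEdges_anti (Finset.coe_subset.mpr (Finset.erase_subset _ _))
    have hr : (G.deleteEdges (↑(B.erase s(p, q)) : Set (Sym2 V))).Reachable u v := by
      by_contra hnr'
      have hcs : CycleSeparating G ↑(B.erase s(p, q)) :=
        ⟨u, v, c₁.mapLe hle, c₂.mapLe hle, hc₁.mapLe hle, hc₂.mapLe hle, hnr'⟩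
      have := hmin _ hsub' hcs
      omega
    obtain ⟨pw⟩ := hr
    have hset : (↑(B.erase s(p, q)) : Set (Sym2 V)) = (↑B : Set (Sym2 V)) \ {s(p, q)} :=
      Finset.coe_erase _ _
    rw [hset] at pw
    rcases reach_split pw with h | h | h
    · exact absurd h hnr
    · exact Or.inl h
    · exact Or.inr h
  by_cases hgB : g ∈ B
  · have key : ∀ z, ¬ (G.deleteEdges (↑B : Set (Sym2 V))).Adj v₀ z := by
      intro z hz
      rw [SimpleGraph.deleteEdges_adj] at hz
      rcases hinc z hz.1 with h | h | h <;> subst h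
      · exact hz.2 (by simpa using heB')
      · exact hz.2 (by simpa using hfB')
      · exact hz.2 (by simpa using (hg' ▸ hgB : s(v₀, x) ∈ B))
    have iso : ∀ t, (G.deleteEdges (↑B : Set (Sym2 V))).Reachable v₀ t → v₀ = t := by
      intro t ht
      obtain ⟨pp⟩ := ht
      cases pp with
      | nil => rfl
      | cons h q => exact absurd h (key _)
    rcases split v₀ u₀ heB' with ⟨h1, h2⟩ | ⟨h1, h2⟩
    · have hv₀u : v₀ = u := iso u h1.symm
      subst hv₀u
      obtain ⟨a, b, ha, hb, hab⟩ := cycle_two_neighbors hc₁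
      exact key a ha
    · have hv₀v : v₀ = v := iso v h2
      subst hv₀v
      obtain ⟨a, b, ha, hb, hab⟩ := cycle_two_neighbors hc₂
      exact key a ha
  · have hgB' : s(v₀, x) ∉ B := by rw [hg']; exact hgB
    have hcs : CycleSeparating G
        ↑(insert s(v₀, x) ((B.erase s(v₀, u₀)).erase s(v₀, w₀))) := by
      rcases split v₀ u₀ heB' with ⟨h1, h2⟩ | ⟨h1, h2⟩
      · have hw : (G.deleteEdges (↑B : Set (Sym2 V))).Reachable w₀ v := by
          rcases split v₀ w₀ hfB' with ⟨h3, h4⟩ | ⟨h3, h4⟩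
          · exact h4
          · exact absurd (h1.trans h4) hnr
        exact core_cs G B heB' hfB' hgadj hgB' hinc c₁ c₂ hc₁ hc₂ hnr h1 h2 hw
      · have hw : (G.deleteEdges (↑B : Set (Sym2 V))).Reachable u w₀ := by
          rcases split v₀ w₀ hfB' with ⟨h3, h4⟩ | ⟨h3, h4⟩
          · exact absurd (h3.trans h2) hnr
          · exact h3
        exact core_cs G B heB' hfB' hgadj hgB' hinc c₂ c₁ hc₂ hc₁
          (fun hh => hnr hh.symm) h2.symm h1.symm hw.symm
    have hfe : s(v₀, w₀) ∈ B.erase s(v₀, u₀) := by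
      refine Finset.mem_erase.mpr ⟨?_, hfB'⟩
      intro hh
      exact hef (by rw [← he', ← hf', hh])
    have hgnotin : s(v₀, x) ∉ (B.erase s(v₀, u₀)).erase s(v₀, w₀) := fun hh =>
      hgB' (Finset.mem_of_mem_erase (Finset.mem_of_mem_erase hh))
    have hsubE : insert s(v₀, x) ((B.erase s(v₀, u₀)).erase s(v₀, w₀)) ⊆ G.edgeFinset := by
      intro y hy
      rcases Finset.mem_insert.mp hy with hy | hy
      · subst hy; exact SimpleGraph.mem_edgeFinset.mpr (G.mem_edgeSet.mpr hgadj)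
      · exact hBE (Finset.mem_of_mem_erase (Finset.mem_of_mem_erase hy))
    have hmle := hmin _ hsubE hcs
    have h2le : 2 ≤ B.card := Finset.one_lt_card.mpr ⟨e, heB, f, hfB, hef⟩
    rw [Finset.card_insert_of_notMem hgnotin, Finset.card_erase_of_mem hfe,
      Finset.card_erase_of_mem heB'] at hmle
    omega
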